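/- The relation ⪯ on data trees of depth at most B whose associated graphs have all simple paths of length at most K is a well-quasi-order: every infinite sequence T_0, T_1, ... of such data trees contains i < j with T_i ⪯ T_j. -/

import Mathlib

structure DataTree (σ D : Type) where
  V : Type
  fin : Fintype V
  root : V
  parent : V → V
  parent_root : parent root = root
  depth : V → ℕ
  depth_root : depth root = 0
  depth_succ : ∀ v, v ≠ root → depth v = depth (parent v) + 1
  label : V → σ ⊕ D
  internal_tag : ∀ v w, w ≠ root → parent w = v → (label v).isLeft

/-- `T₁ ⪯ T₂`: an injective map preserving root, parent-child relation (both ways), Σ-labels,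
and equality/inequality of data values at data leaves. -/
def DataTree.Pre {σ D : Type} (T₁ T₂ : DataTree σ D) : Prop :=
  ∃ φ : T₁.V → T₂.V, Function.Injective φ ∧ φ T₁.root = T₂.root ∧
    (∀ v w, (w ≠ T₁.root ∧ T₁.parent w = v) ↔ (φ w ≠ T₂.root ∧ T₂.parent (φ w) = φ v)) ∧
    (∀ v a, T₁.label v = Sum.inl a → T₂.label (φ v) = Sum.inl a) ∧
    (∀ v w d d', T₁.label v = Sum.inr d → T₁.label w = Sum.inr d' →
      ∃ e e', T₂.label (φ v) = Sum.inr e ∧ T₂.label (φ w) = Sum.inr e' ∧ (d = d' ↔ e = e'))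

/-- Vertices of the graph `G(T)` associated with `T`. -/
def DataTree.GVert {σ D : Type} (T : DataTree σ D) : Type :=
  T.V ⊕ {d : D // ∃ v, T.label v = Sum.inr d}

def DataTree.GAdjBase {σ D : Type} (T : DataTree σ D) : T.GVert → T.GVert → Prop
  | Sum.inl v, Sum.inl w => w ≠ T.root ∧ T.parent w = v
  | Sum.inl v, Sum.inr d => T.label v = Sum.inr d.val
  | _, _ => False

/-- Adjacency in `G(T)`: tree edges plus edges from data leaves to their value vertices. -/
def DataTree.GAdj {σ D : Type} (T : DataTree σ D) (x y : T.GVert) : Prop :=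
  T.GAdjBase x y ∨ T.GAdjBase y x



/-! ### Part A: labeled forests of bounded depth are wqo -/

structure LF (L : Type) : Type 1 where
  V : Type
  finV : Finite V
  p : V → V
  lab : V → L

namespace LF

variable {L : Type}

/-- depth bound: after `d` steps the parent map reaches a fixed point. -/
def Bd (d : ℕ) (F : LF L) : Prop := ∀ v, F.p (F.p^[d] v) = F.p^[d] v

def Emb (F G : LF L) : Prop :=
  ∃ φ : F.V → G.V, Function.Injective φ ∧ (∀ v, φ (F.p v) = G.p (φ v)) ∧
    (∀ v, G.lab (φ v) = F.lab v)

theorem Emb.refl (F : LF L) : Emb F F :=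
  ⟨id, fun _ _ h => h, fun _ => rfl, fun _ => rfl⟩

theorem Emb.trans {F G H : LF L} : Emb F G → Emb G H → Emb F H := by
  rintro ⟨φ, hφi, hφp, hφl⟩ ⟨ψ, hψi, hψp, hψl⟩
  refine ⟨ψ ∘ φ, hψi.comp hφi, fun v => ?_, fun v => ?_⟩
  · simp only [Function.comp_apply, hφp, hψp]
  · simp only [Function.comp_apply, hψl, hφl]

theorem wqo_zero [Finite L] (f : ℕ → LF L) (hf : ∀ n, (f n).Bd 0) :
    ∃ i j, i < j ∧ Emb (f i) (f j) := by
  classical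
  have hfix : ∀ n v, (f n).p v = v := by
    intro n v
    simpa using hf n v
  obtain ⟨i, j, hij, hle⟩ :=
    (Set.isPWO_of_wellQuasiOrderedLE (Set.univ : Set (L → ℕ))).exists_lt
      (f := fun n a => Nat.card {v : (f n).V // (f n).lab v = a}) (fun _ => Set.mem_univ _)
  haveI := (f i).finV; haveI := (f j).finV
  haveI : Fintype (f i).V := Fintype.ofFinite _
  haveI : Fintype (f j).V := Fintype.ofFinite _
  have hE : ∀ a : L, Nonempty ({v : (f i).V // (f i).lab v = a} ↪ {w : (f j).V // (f j).lab w = a}) := by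
    intro a
    apply Function.Embedding.nonempty_of_card_le
    have := hle a
    simpa [Nat.card_eq_fintype_card] using this
  set e : (f i).V ↪ (f j).V :=
    ((Equiv.sigmaFiberEquiv (f i).lab).symm.toEmbedding.trans
      ((Function.Embedding.sigmaMap (Function.Embedding.refl L) (fun a => (hE a).some)).trans
        (Equiv.sigmaFiberEquiv (f j).lab).toEmbedding)) with he
  refine ⟨i, j, hij, e, e.injective, ?_, ?_⟩
  · intro v
    rw [hfix i v, hfix j (e v)]
  · intro v
    exact ((hE ((f i).lab v)).some ⟨v, rfl⟩).2


/-- matching lemma for `SublistForall₂` of mapped nodup lists -/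
theorem matching_aux {α β γ : Type*} (r : γ → γ → Prop) (u : α → γ) (v : β → γ) :
    ∀ (l₂ : List β) (l₁ : List α), List.SublistForall₂ r (l₁.map u) (l₂.map v) →
      l₁.Nodup → l₂.Nodup →
      ∃ g : ∀ x, x ∈ l₁ → β, (∀ x hx, g x hx ∈ l₂ ∧ r (u x) (v (g x hx))) ∧
        (∀ x hx y hy, g x hx = g y hy → x = y) := by
  intro l₂
  induction l₂ with
  | nil =>
    intro l₁ hsf _ _
    have hl₁ : l₁ = [] := by
      cases hl : l₁.map u with
      | nil => exact List.map_eq_nil_iff.mp hl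
      | cons c cs => rw [hl] at hsf; cases hsf
    subst hl₁
    exact ⟨fun x hx => absurd hx List.not_mem_nil,
      fun x hx => absurd hx List.not_mem_nil,
      fun x hx => absurd hx List.not_mem_nil⟩
  | cons b t₂ ih =>
    intro l₁ hsf h₁ h₂
    cases l₁ with
    | nil =>
      exact ⟨fun x hx => absurd hx List.not_mem_nil,
        fun x hx => absurd hx List.not_mem_nil,
        fun x hx => absurd hx List.not_mem_nil⟩
    | cons a t₁ =>
      rw [List.map_cons, List.map_cons] at hsf
      have h₁' : a ∉ t₁ ∧ t₁.Nodup := by simpa using h₁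
      have h₂' : b ∉ t₂ ∧ t₂.Nodup := by simpa using h₂
      cases hsf with
      | cons hr hsf' =>
        obtain ⟨g, hg, hginj⟩ := ih t₁ hsf' h₁'.2 h₂'.2
        classical
        refine ⟨fun x _ => if h : x ∈ t₁ then g x h else b, ?_, ?_⟩
        · intro x hx
          by_cases h : x ∈ t₁
          · simp only [dif_pos h]
            exact ⟨List.mem_cons_of_mem _ (hg x h).1, (hg x h).2⟩
          · have hxa : x = a := by
              rcases List.mem_cons.mp hx with h' | h'
              · exact h'
              · exact absurd h' h
            simp only [dif_neg h]
            subst hxa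
            exact ⟨List.mem_cons_self, hr⟩
        · intro x hx y hy hxy
          dsimp only at hxy
          by_cases h : x ∈ t₁ <;> by_cases h' : y ∈ t₁
          · rw [dif_pos h, dif_pos h'] at hxy; exact hginj x h y h' hxy
          · rw [dif_pos h, dif_neg h'] at hxy
            have := (hg x h).1; rw [hxy] at this; exact absurd this h₂'.1
          · rw [dif_neg h, dif_pos h'] at hxy
            have := (hg y h').1; rw [← hxy] at this; exact absurd this h₂'.1
          · have hxa : x = a := by
              rcases List.mem_cons.mp hx with h'' | h''
              · exact h''
              · exact absurd h'' h
            have hya : y = a := by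
              rcases List.mem_cons.mp hy with h'' | h''
              · exact h''
              · exact absurd h'' h'
            rw [hxa, hya]
      | cons_right hsf' =>
        obtain ⟨g, hg, hginj⟩ := ih (a :: t₁) (by rw [List.map_cons]; exact hsf') h₁ h₂'.2
        exact ⟨g, fun x hx => ⟨List.mem_cons_of_mem _ (hg x hx).1, (hg x hx).2⟩, hginj⟩

section Child

variable {d : ℕ}

theorem child_aux (F : LF L) (hB : F.Bd (d + 1)) (r : F.V) (x : F.V)
    (hx : F.p^[d + 1] x = r ∧ x ≠ r) (h : F.p x ≠ r) :
    F.p^[d + 1] (F.p x) = r ∧ F.p x ≠ r := by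
  constructor
  · rw [← Function.iterate_succ_apply, Function.iterate_succ_apply', hx.1]
    have := hB x
    rwa [hx.1] at this
  · exact h

noncomputable def childP (F : LF L) (hB : F.Bd (d + 1)) (r : F.V)
    (x : {v : F.V // F.p^[d + 1] v = r ∧ v ≠ r}) : {v : F.V // F.p^[d + 1] v = r ∧ v ≠ r} := by
  classical
  exact if h : F.p x.val = r then x else ⟨F.p x.val, child_aux F hB r x.val x.2 h⟩

theorem childP_of_root (F : LF L) (hB : F.Bd (d + 1)) (r : F.V)
    (x : {v : F.V // F.p^[d + 1] v = r ∧ v ≠ r}) (h : F.p x.val = r) :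
    childP F hB r x = x := by
  rw [childP]; simp only [h, dite_true, dif_pos]

theorem childP_val_of_ne (F : LF L) (hB : F.Bd (d + 1)) (r : F.V)
    (x : {v : F.V // F.p^[d + 1] v = r ∧ v ≠ r}) (h : F.p x.val ≠ r) :
    (childP F hB r x).val = F.p x.val := by
  rw [childP]; simp only [dif_neg h]

theorem childP_eq_self_iff (F : LF L) (hB : F.Bd (d + 1)) (r : F.V)
    (x : {v : F.V // F.p^[d + 1] v = r ∧ v ≠ r}) :
    childP F hB r x = x ↔ F.p x.val = r := by
  constructor
  · intro he
    by_contra h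
    have h1 := childP_val_of_ne F hB r x h
    rw [he] at h1
    have h2 : F.p^[d + 1] x.val = x.val := Function.iterate_fixed h1.symm _
    exact x.2.2 (h2 ▸ x.2.1).symm.symm
  · exact childP_of_root F hB r x

noncomputable def child (F : LF L) (hB : F.Bd (d + 1)) (r : F.V) : LF L where
  V := {v : F.V // F.p^[d + 1] v = r ∧ v ≠ r}
  finV := by haveI := F.finV; exact Subtype.finite
  p := childP F hB r
  lab := fun x => F.lab x.val

theorem child_bd (F : LF L) (hB : F.Bd (d + 1)) (r : F.V) : (child F hB r).Bd d := by
  intro x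
  have claim : ∀ (k : ℕ) (x : (child F hB r).V),
      (child F hB r).p^[k + 1] x = (child F hB r).p^[k] x ∨
        ((child F hB r).p^[k] x).val = F.p^[k] x.val := by
    intro k
    induction k with
    | zero => intro x; right; rfl
    | succ k ihk =>
      intro x
      rcases ihk x with h | h
      · left
        calc (child F hB r).p^[k + 1 + 1] x
            = (child F hB r).p ((child F hB r).p^[k + 1] x) :=
              Function.iterate_succ_apply' _ _ _
          _ = (child F hB r).p ((child F hB r).p^[k] x) := by rw [h]
          _ = (child F hB r).p^[k + 1] x := (Function.iterate_succ_apply' _ _ _).symm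
      · by_cases hy : F.p ((child F hB r).p^[k] x).val = r
        · left
          have h1 : (child F hB r).p^[k + 1] x = (child F hB r).p^[k] x := by
            rw [Function.iterate_succ_apply' ((child F hB r).p) k x]
            exact childP_of_root F hB r _ hy
          calc (child F hB r).p^[k + 1 + 1] x
              = (child F hB r).p ((child F hB r).p^[k + 1] x) :=
                Function.iterate_succ_apply' _ _ _
            _ = (child F hB r).p^[k + 1] x := by rw [h1]; exact childP_of_root F hB r _ hy
        · right
          rw [Function.iterate_succ_apply' ((child F hB r).p) k x,
            Function.iterate_succ_apply' F.p k x.val]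
          rw [show (child F hB r).p ((child F hB r).p^[k] x) = childP F hB r ((child F hB r).p^[k] x) from rfl]
          rw [childP_val_of_ne F hB r _ hy, h]
  rcases claim d x with h | h
  · rw [Function.iterate_succ_apply'] at h; exact h
  · show childP F hB r ((child F hB r).p^[d] x) = (child F hB r).p^[d] x
    apply childP_of_root
    rw [h, ← Function.iterate_succ_apply' F.p d x.val]
    exact x.2.1

end Child

noncomputable def rootsL (F : LF L) : List F.V :=
  letI := F.finV
  letI : Fintype F.V := Fintype.ofFinite _
  letI : DecidablePred (fun v : F.V => F.p v = v) := fun _ => Classical.propDecidable _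
  (Finset.univ.filter (fun v => F.p v = v)).toList

theorem mem_rootsL (F : LF L) (v : F.V) : v ∈ rootsL F ↔ F.p v = v := by
  unfold rootsL
  simp [Finset.mem_toList, Finset.mem_filter]

theorem rootsL_nodup (F : LF L) : (rootsL F).Nodup := by
  unfold rootsL
  exact Finset.nodup_toList _

theorem lf_wqo [Finite L] : ∀ (d : ℕ) (f : ℕ → LF L), (∀ n, (f n).Bd d) →
    ∃ i j, i < j ∧ Emb (f i) (f j) := by
  intro d
  induction d with
  | zero => exact wqo_zero
  | succ d IH =>
    intro f hf
    classical
    set RP : (L × LF L) → (L × LF L) → Prop := fun x y => x.1 = y.1 ∧ Emb x.2 y.2 with hRP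
    haveI : IsRefl (L × LF L) RP := ⟨fun x => ⟨rfl, Emb.refl _⟩⟩
    haveI : IsTrans (L × LF L) RP := ⟨fun a b c h₁ h₂ => ⟨h₁.1.trans h₂.1, h₁.2.trans h₂.2⟩⟩
    have hS : ({x : L × LF L | x.2.Bd d}).PartiallyWellOrderedOn RP := by
      rw [Set.partiallyWellOrderedOn_iff_exists_lt]
      intro g hg
      obtain ⟨a, ha⟩ := Finite.exists_infinite_fiber (fun n => (g n).1)
      haveI : Infinite ((fun n : ℕ => (g n).1) ⁻¹' {a} : Set ℕ) := ha
      obtain ⟨i, j, hij, hemb⟩ := IH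
        (fun k => (g ((Nat.orderEmbeddingOfSet ((fun n : ℕ => (g n).1) ⁻¹' {a})) k)).2)
        (fun k => hg _)
      refine ⟨_, _, (Nat.orderEmbeddingOfSet _).strictMono hij, ?_, hemb⟩
      have h1 : ∀ k : ℕ,
          (g ((Nat.orderEmbeddingOfSet ((fun n : ℕ => (g n).1) ⁻¹' {a})) k)).1 = a := by
        intro k
        have hm : (Nat.orderEmbeddingOfSet ((fun n : ℕ => (g n).1) ⁻¹' {a})) k ∈
            ((fun n : ℕ => (g n).1) ⁻¹' {a}) := by
          have h0 : (Nat.orderEmbeddingOfSet ((fun n : ℕ => (g n).1) ⁻¹' {a})) k ∈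
              Set.range ⇑(Nat.orderEmbeddingOfSet ((fun n : ℕ => (g n).1) ⁻¹' {a})) :=
            Set.mem_range_self k
          rwa [Nat.orderEmbeddingOfSet_range] at h0
        simp only [Set.mem_preimage, Set.mem_singleton_iff] at hm
        exact hm
      rw [h1 i, h1 j]
    haveI : IsPreorder (L × LF L) RP :=
      { refl := fun x => ⟨rfl, Emb.refl _⟩,
        trans := fun a b c h₁ h₂ => ⟨h₁.1.trans h₂.1, h₁.2.trans h₂.2⟩ }
    have hH := Set.PartiallyWellOrderedOn.partiallyWellOrderedOn_sublistForall₂ RP hS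
    obtain ⟨i, j, hij, hsf⟩ := hH.exists_lt
      (f := fun n => (rootsL (f n)).map (fun r => ((f n).lab r, child (f n) (hf n) r)))
      (fun n x hx => by
        simp only [List.mem_map] at hx
        obtain ⟨r, _, rfl⟩ := hx
        exact child_bd (f n) (hf n) r)
    obtain ⟨g, hg, hginj⟩ := matching_aux RP
      (fun r => ((f i).lab r, child (f i) (hf i) r))
      (fun r => ((f j).lab r, child (f j) (hf j) r))
      (rootsL (f j)) (rootsL (f i)) hsf (rootsL_nodup _) (rootsL_nodup _)
    have hgroot : ∀ r hr, (f j).p (g r hr) = g r hr := fun r hr => (mem_rootsL _ _).1 (hg r hr).1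
    have hglab : ∀ r hr, (f j).lab (g r hr) = (f i).lab r := fun r hr => ((hg r hr).2.1).symm
    have hgemb : ∀ r hr, Emb (child (f i) (hf i) r) (child (f j) (hf j) (g r hr)) :=
      fun r hr => (hg r hr).2.2
    have hψ : ∀ r hr, ∃ ψ : (child (f i) (hf i) r).V → (child (f j) (hf j) (g r hr)).V,
        Function.Injective ψ ∧
        (∀ x, ψ ((child (f i) (hf i) r).p x) = (child (f j) (hf j) (g r hr)).p (ψ x)) ∧
        (∀ x, (child (f j) (hf j) (g r hr)).lab (ψ x) = (child (f i) (hf i) r).lab x) :=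
      fun r hr => hgemb r hr
    choose ψ hψinj hψp hψlab using hψ
    have hgcongr : ∀ r₁ r₂, r₁ = r₂ → ∀ hr₁ hr₂, g r₁ hr₁ = g r₂ hr₂ := by
      intro r₁ r₂ hr hr₁ hr₂; subst hr; rfl
    have hψcongr : ∀ r₁ r₂ (hr : r₁ = r₂) hr₁ hr₂ (x₁ : (child (f i) (hf i) r₁).V)
        (x₂ : (child (f i) (hf i) r₂).V), x₁.val = x₂.val →
        (ψ r₁ hr₁ x₁).val = (ψ r₂ hr₂ x₂).val := by
      intro r₁ r₂ hr hr₁ hr₂ x₁ x₂ hx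
      subst hr
      have hx' : x₁ = x₂ := Subtype.ext hx
      rw [hx']
    have hRmem : ∀ v : (f i).V, (f i).p^[d+1] v ∈ rootsL (f i) :=
      fun v => (mem_rootsL _ _).2 (hf i v)
    have hneR : ∀ v : (f i).V, (f i).p v ≠ v → v ≠ (f i).p^[d+1] v := by
      intro v h hv
      apply h
      conv_lhs => rw [hv]
      rw [hf i v]
      exact hv.symm
    have hψval_root : ∀ r hr x, (f j).p^[d+1] ((ψ r hr x).val) = g r hr :=
      fun r hr x => (ψ r hr x).2.1
    have hψval_ne : ∀ r hr x, (ψ r hr x).val ≠ g r hr := fun r hr x => (ψ r hr x).2.2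
    have himg_nonfix : ∀ r hr x, (f j).p ((ψ r hr x).val) ≠ (ψ r hr x).val := by
      intro r hr x hfix
      have h2 : (f j).p^[d+1] ((ψ r hr x).val) = (ψ r hr x).val :=
        Function.iterate_fixed hfix (d+1)
      exact hψval_ne r hr x (h2.symm.trans (hψval_root r hr x))
    have hψinjglob : ∀ r₁ hr₁ r₂ hr₂ (x₁ : (child (f i) (hf i) r₁).V)
        (x₂ : (child (f i) (hf i) r₂).V), (ψ r₁ hr₁ x₁).val = (ψ r₂ hr₂ x₂).val →
        x₁.val = x₂.val := by
      intro r₁ hr₁ r₂ hr₂ x₁ x₂ hval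
      have hr : r₁ = r₂ := by
        apply hginj r₁ hr₁ r₂ hr₂
        rw [← hψval_root r₁ hr₁ x₁, ← hψval_root r₂ hr₂ x₂, hval]
      subst hr
      have hψeq : ψ r₁ hr₁ x₁ = ψ r₁ hr₁ x₂ := Subtype.ext hval
      rw [hψinj r₁ hr₁ hψeq]
    refine ⟨i, j, hij, fun v => if h : (f i).p v = v then g v ((mem_rootsL _ _).2 h)
      else (ψ ((f i).p^[d+1] v) (hRmem v) ⟨v, rfl, hneR v h⟩).val, ?_, ?_, ?_⟩
    · -- injective
      intro v w hvw
      dsimp only at hvw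
      by_cases h : (f i).p v = v <;> by_cases h' : (f i).p w = w
      · rw [dif_pos h, dif_pos h'] at hvw
        exact hginj _ _ _ _ hvw
      · rw [dif_pos h, dif_neg h'] at hvw
        exfalso
        have h1 := hgroot v ((mem_rootsL _ _).2 h)
        rw [hvw] at h1
        exact himg_nonfix _ _ _ h1
      · rw [dif_neg h, dif_pos h'] at hvw
        exfalso
        have h1 := hgroot w ((mem_rootsL _ _).2 h')
        rw [← hvw] at h1
        exact himg_nonfix _ _ _ h1
      · rw [dif_neg h, dif_neg h'] at hvw
        exact hψinjglob _ _ _ _ _ _ hvw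
    · -- commutes with parent maps
      intro v
      dsimp only
      by_cases h : (f i).p v = v
      · have h2 : (f i).p ((f i).p v) = (f i).p v := congrArg (f i).p h
        rw [dif_pos h2, dif_pos h, hgroot v ((mem_rootsL (f i) v).2 h)]
        exact hgcongr _ _ h _ _
      · by_cases h2 : (f i).p ((f i).p v) = (f i).p v
        · rw [dif_pos h2, dif_neg h]
          have hPv : (f i).p^[d+1] v = (f i).p v := by
            rw [Function.iterate_succ_apply]
            exact Function.iterate_fixed h2 d
          have hcond : (f i).p (⟨v, rfl, hneR v h⟩ :
              (child (f i) (hf i) ((f i).p^[d+1] v)).V).val = (f i).p^[d+1] v := hPv.symm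
          have hfix : (child (f i) (hf i) ((f i).p^[d+1] v)).p ⟨v, rfl, hneR v h⟩ =
              ⟨v, rfl, hneR v h⟩ :=
            childP_of_root (f i) (hf i) ((f i).p^[d+1] v) ⟨v, rfl, hneR v h⟩ hcond
          have hcomm := hψp ((f i).p^[d+1] v) (hRmem v) ⟨v, rfl, hneR v h⟩
          rw [hfix] at hcomm
          have hjcond : (f j).p ((ψ _ (hRmem v) ⟨v, rfl, hneR v h⟩).val) =
              g ((f i).p^[d+1] v) (hRmem v) :=
            (childP_eq_self_iff (f j) (hf j) (g _ (hRmem v))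
              (ψ _ (hRmem v) ⟨v, rfl, hneR v h⟩)).1 hcomm.symm
          rw [hjcond]
          exact hgcongr _ _ hPv.symm _ _
        · rw [dif_neg h2, dif_neg h]
          have hcondne : (f i).p (⟨v, rfl, hneR v h⟩ :
              (child (f i) (hf i) ((f i).p^[d+1] v)).V).val ≠ (f i).p^[d+1] v := by
            intro hE
            apply h2
            conv_lhs => rw [hE]
            rw [hf i v]
            exact hE.symm
          have hstep : ((child (f i) (hf i) ((f i).p^[d+1] v)).p ⟨v, rfl, hneR v h⟩).val =
              (f i).p v :=
            childP_val_of_ne (f i) (hf i) ((f i).p^[d+1] v) ⟨v, rfl, hneR v h⟩ hcondne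
          have hcomm := hψp ((f i).p^[d+1] v) (hRmem v) ⟨v, rfl, hneR v h⟩
          by_cases hjfix : (f j).p ((ψ _ (hRmem v) ⟨v, rfl, hneR v h⟩).val) = g _ (hRmem v)
          · exfalso
            have hfixj : ((f j).child (hf j) (g ((f i).p^[d+1] v) (hRmem v))).p
                (ψ _ (hRmem v) ⟨v, rfl, hneR v h⟩) = ψ _ (hRmem v) ⟨v, rfl, hneR v h⟩ :=
              childP_of_root (f j) (hf j) (g ((f i).p^[d+1] v) (hRmem v))
                (ψ _ (hRmem v) ⟨v, rfl, hneR v h⟩) hjfix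
            rw [hfixj] at hcomm
            have hval := congrArg Subtype.val (hψinj _ (hRmem v) hcomm)
            rw [hstep] at hval
            exact h hval
          · have hjval : ((child (f j) (hf j) (g _ (hRmem v))).p
                (ψ _ (hRmem v) ⟨v, rfl, hneR v h⟩)).val =
                (f j).p ((ψ _ (hRmem v) ⟨v, rfl, hneR v h⟩).val) :=
              childP_val_of_ne (f j) (hf j) (g ((f i).p^[d+1] v) (hRmem v))
                (ψ _ (hRmem v) ⟨v, rfl, hneR v h⟩) hjfix
            rw [← hjval, ← hcomm]
            apply hψcongr
            · rw [← Function.iterate_succ_apply (f i).p (d+1) v,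
                Function.iterate_succ_apply' (f i).p (d+1) v]
              exact hf i v
            · rw [hstep]
    · -- labels
      intro v
      dsimp only
      by_cases h : (f i).p v = v
      · rw [dif_pos h]
        exact hglab v _
      · rw [dif_neg h]
        exact hψlab _ (hRmem v) ⟨v, rfl, hneR v h⟩

end LF


section DFS

variable {V : Type}

def Anc (p : V → V) (u w : V) : Prop := ∃ k, p^[k] w = u

def RIn (A : V → V → Prop) (s : Finset V) (a b : V) : Prop :=
  Relation.ReflTransGen (fun x y => x ∈ s ∧ y ∈ s ∧ A x y) a b

structure IsForest (A : V → V → Prop) (s : Finset V) (p : V → V) (h : V → ℕ) : Prop where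
  out_p : ∀ v, v ∉ s → p v = v
  out_h : ∀ v, v ∉ s → h v = 0
  mem_p : ∀ v, v ∈ s → p v ∈ s
  root_h : ∀ v, p v = v → h v = 0
  step : ∀ v, v ∈ s → p v ≠ v → A v (p v) ∧ h v = h (p v) + 1
  anc : ∀ v, v ∈ s → ∀ w, w ∈ s → A v w → Anc p v w ∨ Anc p w v

theorem RIn.symm' {A : V → V → Prop} (hA : ∀ x y, A x y → A y x) {s : Finset V} {a b : V}
    (h : RIn A s a b) : RIn A s b a :=
  (@Relation.ReflTransGen.stdSymm _ _ ⟨fun _ _ hx => ⟨hx.2.1, hx.1, hA _ _ hx.2.2⟩⟩).symm _ _ h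

theorem rin_exit {A : V → V → Prop} {s : Finset V} {r v : V} [DecidableEq V]
    (h : RIn A s r v) (hne : v ≠ r) :
    ∃ x, x ∈ s.erase r ∧ A r x ∧ RIn A (s.erase r) x v := by
  revert hne
  induction h with
  | refl => intro hne; exact absurd rfl hne
  | @tail b c hrb hbc ih =>
    intro hne
    obtain ⟨hbs, hcs, hAbc⟩ := hbc
    by_cases hbr : b = r
    · subst hbr
      exact ⟨c, Finset.mem_erase.2 ⟨hne, hcs⟩, hAbc, Relation.ReflTransGen.refl⟩
    · obtain ⟨x, hx, hAx, hRx⟩ := ih hbr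
      exact ⟨x, hx, hAx, hRx.tail
        ⟨Finset.mem_erase.2 ⟨hbr, hbs⟩, Finset.mem_erase.2 ⟨hne, hcs⟩, hAbc⟩⟩

theorem rin_filter {A : V → V → Prop} {er C : Finset V} {r₁ : V}
    (hC : ∀ w, w ∈ er → RIn A er r₁ w → w ∈ C) :
    ∀ {v}, RIn A er r₁ v → RIn A C r₁ v := by
  intro v h
  induction h with
  | refl => exact Relation.ReflTransGen.refl
  | @tail b c hrb hbc ih =>
    exact ih.tail ⟨hC b hbc.1 hrb, hC c hbc.2.1 (hrb.tail hbc), hbc.2.2⟩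

theorem anc_lift (p q : V → V) (Pr : V → Prop)
    (hpq : ∀ w, Pr w → (p w = q w ∧ Pr (q w)) ∨ (∀ m, q^[m] w = w)) :
    ∀ (k : ℕ) (w : V), Pr w → ∃ j, p^[j] w = q^[k] w := by
  intro k
  induction k with
  | zero => intro w _; exact ⟨0, rfl⟩
  | succ k ih =>
    intro w hw
    rcases hpq w hw with ⟨h1, h2⟩ | hfix
    · obtain ⟨j, hj⟩ := ih (q w) h2
      refine ⟨j + 1, ?_⟩
      rw [Function.iterate_succ_apply p j w, h1, hj, ← Function.iterate_succ_apply q k w]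
    · exact ⟨0, by rw [Function.iterate_zero_apply, hfix (k+1)]⟩

theorem dfs_conn (A : V → V → Prop) (hA : ∀ x y, A x y → A y x) [DecidableEq V] :
    ∀ (n : ℕ) (s : Finset V), s.card ≤ n → ∀ r, r ∈ s → (∀ v, v ∈ s → RIn A s r v) →
      ∃ p h, IsForest A s p h ∧ p r = r ∧ (∀ v, v ∈ s → Anc p r v) := by
  intro n
  induction n with
  | zero =>
    intro s hs r hr _
    rw [Nat.le_zero, Finset.card_eq_zero] at hs
    subst hs; exact absurd hr (Finset.notMem_empty r)
  | succ n IHc =>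
    intro s hcard r hr hconn
    classical
    have inner : ∀ (m : ℕ) (t : Finset V), t.card ≤ m → t ⊆ s.erase r →
        (∀ v, v ∈ t → ∀ w, w ∈ s.erase r → RIn A (s.erase r) v w → w ∈ t) →
        ∃ (p : V → V) (h : V → ℕ), (∀ v, v ∉ t → p v = v ∧ h v = 0) ∧
          (∀ v, v ∈ t → (p v ∈ t ∨ p v = r) ∧ p v ≠ v ∧ A v (p v) ∧
            h v = (if p v = r then 1 else h (p v) + 1)) ∧
          (∀ v, v ∈ t → ∀ w, w ∈ t → A v w → Anc p v w ∨ Anc p w v) ∧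
          (∀ v, v ∈ t → Anc p r v) := by
      intro m
      induction m with
      | zero =>
        intro t ht _ _
        rw [Nat.le_zero, Finset.card_eq_zero] at ht
        subst ht
        exact ⟨id, fun _ => 0, fun v _ => ⟨rfl, rfl⟩,
          fun v hv => absurd hv (Finset.notMem_empty v),
          fun v hv => absurd hv (Finset.notMem_empty v),
          fun v hv => absurd hv (Finset.notMem_empty v)⟩
      | succ m IHt =>
        intro t htc hts hclosed
        rcases Finset.eq_empty_or_nonempty t with rfl | ⟨v₀, hv₀⟩
        · exact ⟨id, fun _ => 0, fun v _ => ⟨rfl, rfl⟩,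
            fun v hv => absurd hv (Finset.notMem_empty v),
            fun v hv => absurd hv (Finset.notMem_empty v),
            fun v hv => absurd hv (Finset.notMem_empty v)⟩
        · have hv₀er : v₀ ∈ s.erase r := hts hv₀
          have hv₀ne : v₀ ≠ r := (Finset.mem_erase.1 hv₀er).1
          have hv₀s : v₀ ∈ s := (Finset.mem_erase.1 hv₀er).2
          obtain ⟨r₁, hr₁er, hAr₁, hRr₁⟩ := rin_exit (hconn v₀ hv₀s) hv₀ne
          have hr₁t : r₁ ∈ t := hclosed v₀ hv₀ r₁ hr₁er (RIn.symm' hA hRr₁)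
          set C := (s.erase r).filter (fun w => RIn A (s.erase r) r₁ w) with hCdef
          have hCsub : C ⊆ s.erase r := Finset.filter_subset _ _
          have hmemC : ∀ w, w ∈ C ↔ (w ∈ s.erase r ∧ RIn A (s.erase r) r₁ w) :=
            fun w => Finset.mem_filter
          have hr₁C : r₁ ∈ C := (hmemC r₁).2 ⟨hr₁er, Relation.ReflTransGen.refl⟩
          have hCt : C ⊆ t := by
            intro w hw
            obtain ⟨hw1, hw2⟩ := (hmemC w).1 hw
            exact hclosed r₁ hr₁t w hw1 hw2
          have hrC : r ∉ C := fun hc => (Finset.mem_erase.1 (hCsub hc)).1 rfl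
          have hrt : r ∉ t := fun ht' => (Finset.mem_erase.1 (hts ht')).1 rfl
          have hCcard : C.card ≤ n := by
            have h1 : C.card ≤ (s.erase r).card := Finset.card_le_card hCsub
            have h2 : (s.erase r).card < s.card := Finset.card_erase_lt_of_mem hr
            omega
          have hCconn : ∀ v, v ∈ C → RIn A C r₁ v := by
            intro v hv
            exact rin_filter (fun w hw hrw => (hmemC w).2 ⟨hw, hrw⟩) ((hmemC v).1 hv).2
          obtain ⟨p₁, h₁, hF₁, hp₁r₁, hanc₁⟩ := IHc C hCcard r₁ hr₁C hCconn
          have htCcard : (t \ C).card ≤ m := by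
            have hss : t \ C ⊂ t := by
              refine Finset.ssubset_iff_of_subset (Finset.sdiff_subset) |>.2 ?_
              exact ⟨r₁, hr₁t, fun hmem => (Finset.mem_sdiff.1 hmem).2 hr₁C⟩
            have := Finset.card_lt_card hss
            omega
          have htCsub : t \ C ⊆ s.erase r := fun w hw => hts (Finset.sdiff_subset hw)
          have htCclosed : ∀ v, v ∈ t \ C → ∀ w, w ∈ s.erase r →
              RIn A (s.erase r) v w → w ∈ t \ C := by
            intro v hv w hw hvw
            obtain ⟨hvt, hvC⟩ := Finset.mem_sdiff.1 hv
            refine Finset.mem_sdiff.2 ⟨hclosed v hvt w hw hvw, ?_⟩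
            intro hwC
            apply hvC
            exact (hmemC v).2 ⟨hts hvt, ((hmemC w).1 hwC).2.trans (RIn.symm' hA hvw)⟩
          obtain ⟨p₂, h₂, hout₂, hmem₂, hanc₂, hranc₂⟩ := IHt (t \ C) htCcard htCsub htCclosed
          have hp₁ne : ∀ v, v ∈ C → v ≠ r₁ → p₁ v ≠ v := by
            intro v hv hne hfix
            obtain ⟨k, hk⟩ := hanc₁ v hv
            rw [Function.iterate_fixed hfix k] at hk
            exact hne hk
          refine ⟨fun v => if v ∈ C then (if v = r₁ then r else p₁ v) else p₂ v,
                 fun v => if v ∈ C then h₁ v + 1 else h₂ v, ?_, ?_, ?_, ?_⟩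
          · -- outside t
            intro v hv
            have hvC : v ∉ C := fun hc => hv (hCt hc)
            have hvtC : v ∉ t \ C := fun hmem => hv (Finset.sdiff_subset hmem)
            dsimp only
            rw [if_neg hvC, if_neg hvC]
            exact hout₂ v hvtC
          · -- membership facts
            intro v hv
            beta_reduce
            by_cases hvC : v ∈ C
            · by_cases hvr₁ : v = r₁
              · rw [if_pos hvC, if_pos hvr₁]
                have hvne : v ≠ r := (Finset.mem_erase.1 (hCsub hvC)).1
                refine ⟨Or.inr rfl, fun he => hvne he.symm, ?_, ?_⟩
                · rw [hvr₁]; exact hA r r₁ hAr₁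
                · rw [if_pos rfl, hvr₁, hF₁.root_h r₁ hp₁r₁, if_pos hr₁C]
              · rw [if_pos hvC, if_neg hvr₁]
                have hp₁C : p₁ v ∈ C := hF₁.mem_p v hvC
                have hp₁r : p₁ v ≠ r := fun he => hrC (he ▸ hp₁C)
                have hstep := hF₁.step v hvC (hp₁ne v hvC hvr₁)
                refine ⟨Or.inl (hCt hp₁C), hp₁ne v hvC hvr₁, hstep.1, ?_⟩
                rw [if_neg hp₁r, if_pos hp₁C, hstep.2, if_pos hvC]
            · have hvtC : v ∈ t \ C := Finset.mem_sdiff.2 ⟨hv, hvC⟩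
              rw [if_neg hvC]
              obtain ⟨hor, hne, hAv, hh⟩ := hmem₂ v hvtC
              refine ⟨?_, hne, hAv, ?_⟩
              · rcases hor with h' | h'
                · exact Or.inl (Finset.sdiff_subset h')
                · exact Or.inr h'
              · by_cases hpr : p₂ v = r
                · rw [if_pos hpr, if_neg hvC]
                  rw [if_pos hpr] at hh
                  exact hh
                · rw [if_neg hpr]
                  rw [if_neg hpr] at hh
                  have hp₂tC : p₂ v ∈ t \ C := by
                    rcases hor with h' | h'
                    · exact h'
                    · exact absurd h' hpr
                  rw [if_neg (Finset.mem_sdiff.1 hp₂tC).2, if_neg hvC]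
                  exact hh
          · -- ancestry
            have hliftC : ∀ u w, w ∈ C → Anc p₁ u w →
                Anc (fun v => if v ∈ C then (if v = r₁ then r else p₁ v) else p₂ v) u w := by
              rintro u w hw ⟨k, hk⟩
              obtain ⟨j, hj⟩ := anc_lift
                (fun v => if v ∈ C then (if v = r₁ then r else p₁ v) else p₂ v) p₁
                (fun x => x ∈ C)
                (fun x hx => by
                  by_cases hxr : x = r₁
                  · exact Or.inr (fun m => by rw [hxr]; exact Function.iterate_fixed hp₁r₁ m)
                  · exact Or.inl ⟨by rw [if_pos hx, if_neg hxr], hF₁.mem_p x hx⟩)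
                k w hw
              exact ⟨j, by rw [hj, hk]⟩
            have hliftT : ∀ u w, w ∉ C → Anc p₂ u w →
                Anc (fun v => if v ∈ C then (if v = r₁ then r else p₁ v) else p₂ v) u w := by
              rintro u w hw ⟨k, hk⟩
              obtain ⟨j, hj⟩ := anc_lift
                (fun v => if v ∈ C then (if v = r₁ then r else p₁ v) else p₂ v) p₂
                (fun x => x ∉ C)
                (fun x hx => by
                  refine Or.inl ⟨by rw [if_neg hx], ?_⟩
                  by_cases hxt : x ∈ t \ C
                  · rcases (hmem₂ x hxt).1 with h' | h'
                    · exact (Finset.mem_sdiff.1 h').2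
                    · rw [h']; exact hrC
                  · rw [(hout₂ x hxt).1]; exact hx) k w hw
              exact ⟨j, by rw [hj, hk]⟩
            have hcross : ∀ v w, v ∈ C → w ∈ t → A v w → w ∈ C := by
              intro v w hvC hwt hAvw
              refine (hmemC w).2 ⟨hts hwt, ?_⟩
              exact ((hmemC v).1 hvC).2.tail ⟨hCsub hvC, hts hwt, hAvw⟩
            intro v hv w hw hAvw
            by_cases hvC : v ∈ C <;> by_cases hwC : w ∈ C
            · rcases hF₁.anc v hvC w hwC hAvw with h' | h'
              · exact Or.inl (hliftC v w hwC h')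
              · exact Or.inr (hliftC w v hvC h')
            · exact absurd (hcross v w hvC hw hAvw) hwC
            · exact absurd (hcross w v hwC hv (hA _ _ hAvw)) hvC
            · have hvtC : v ∈ t \ C := Finset.mem_sdiff.2 ⟨hv, hvC⟩
              have hwtC : w ∈ t \ C := Finset.mem_sdiff.2 ⟨hw, hwC⟩
              rcases hanc₂ v hvtC w hwtC hAvw with h' | h'
              · exact Or.inl (hliftT v w hwC h')
              · exact Or.inr (hliftT w v hvC h')
          · -- root ancestry
            have hliftC : ∀ u w, w ∈ C → Anc p₁ u w →
                Anc (fun v => if v ∈ C then (if v = r₁ then r else p₁ v) else p₂ v) u w := by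
              rintro u w hw ⟨k, hk⟩
              obtain ⟨j, hj⟩ := anc_lift
                (fun v => if v ∈ C then (if v = r₁ then r else p₁ v) else p₂ v) p₁
                (fun x => x ∈ C)
                (fun x hx => by
                  by_cases hxr : x = r₁
                  · exact Or.inr (fun m => by rw [hxr]; exact Function.iterate_fixed hp₁r₁ m)
                  · exact Or.inl ⟨by rw [if_pos hx, if_neg hxr], hF₁.mem_p x hx⟩)
                k w hw
              exact ⟨j, by rw [hj, hk]⟩
            have hliftT : ∀ u w, w ∉ C → Anc p₂ u w →
                Anc (fun v => if v ∈ C then (if v = r₁ then r else p₁ v) else p₂ v) u w := by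
              rintro u w hw ⟨k, hk⟩
              obtain ⟨j, hj⟩ := anc_lift
                (fun v => if v ∈ C then (if v = r₁ then r else p₁ v) else p₂ v) p₂
                (fun x => x ∉ C)
                (fun x hx => by
                  refine Or.inl ⟨by rw [if_neg hx], ?_⟩
                  by_cases hxt : x ∈ t \ C
                  · rcases (hmem₂ x hxt).1 with h' | h'
                    · exact (Finset.mem_sdiff.1 h').2
                    · rw [h']; exact hrC
                  · rw [(hout₂ x hxt).1]; exact hx) k w hw
              exact ⟨j, by rw [hj, hk]⟩
            intro v hv
            by_cases hvC : v ∈ C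
            · obtain ⟨j, hj⟩ := hliftC r₁ v hvC (hanc₁ v hvC)
              refine ⟨j + 1, ?_⟩
              rw [Function.iterate_succ_apply' _ j v, hj]
              rw [if_pos hr₁C, if_pos rfl]
            · exact hliftT r v hvC (hranc₂ v (Finset.mem_sdiff.2 ⟨hv, hvC⟩))
    obtain ⟨p₀, h₀, hout, hmem, hanc, hranc⟩ := inner (s.erase r).card (s.erase r) le_rfl
      (Finset.Subset.refl _) (fun v hv w hw _ => hw)
    have hrer : r ∉ s.erase r := Finset.notMem_erase r s
    refine ⟨p₀, h₀, ⟨?_, ?_, ?_, ?_, ?_, ?_⟩, (hout r hrer).1, ?_⟩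
    · intro v hv
      exact (hout v (fun hm => hv (Finset.mem_of_mem_erase hm))).1
    · intro v hv
      exact (hout v (fun hm => hv (Finset.mem_of_mem_erase hm))).2
    · intro v hv
      by_cases hver : v ∈ s.erase r
      · rcases (hmem v hver).1 with h' | h'
        · exact Finset.mem_of_mem_erase h'
        · rw [h']; exact hr
      · rw [(hout v hver).1]; exact hv
    · intro v hfix
      by_cases hver : v ∈ s.erase r
      · exact absurd hfix (hmem v hver).2.1
      · exact (hout v hver).2
    · intro v hv hne
      have hver : v ∈ s.erase r := by
        by_contra hm
        exact hne (hout v hm).1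
      obtain ⟨hor, _, hAv, hh⟩ := hmem v hver
      refine ⟨hAv, ?_⟩
      by_cases hpr : p₀ v = r
      · rw [if_pos hpr] at hh
        rw [hh, hpr, (hout r hrer).2]
      · rw [if_neg hpr] at hh
        exact hh
    · intro v hv w hw hAvw
      by_cases hvr : v = r
      · subst hvr
        by_cases hwr : w = v
        · exact Or.inl ⟨0, by rw [hwr, Function.iterate_zero_apply]⟩
        · exact Or.inl (hranc w (Finset.mem_erase.2 ⟨hwr, hw⟩))
      · by_cases hwr : w = r
        · subst hwr
          exact Or.inr (hranc v (Finset.mem_erase.2 ⟨hvr, hv⟩))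
        · exact hanc v (Finset.mem_erase.2 ⟨hvr, hv⟩) w (Finset.mem_erase.2 ⟨hwr, hw⟩) hAvw
    · intro v hv
      by_cases hvr : v = r
      · exact ⟨0, by rw [hvr, Function.iterate_zero_apply]⟩
      · exact hranc v (Finset.mem_erase.2 ⟨hvr, hv⟩)


theorem dfs_forest (A : V → V → Prop) (hA : ∀ x y, A x y → A y x) [DecidableEq V] :
    ∀ (n : ℕ) (s : Finset V), s.card ≤ n → ∃ (p : V → V) (h : V → ℕ), IsForest A s p h := by
  intro n
  induction n with
  | zero =>
    intro s hs
    rw [Nat.le_zero, Finset.card_eq_zero] at hs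
    subst hs
    exact ⟨id, fun _ => 0, ⟨fun v _ => rfl, fun v _ => rfl,
      fun v hv => absurd hv (Finset.notMem_empty v), fun _ _ => rfl,
      fun v hv => absurd hv (Finset.notMem_empty v),
      fun v hv => absurd hv (Finset.notMem_empty v)⟩⟩
  | succ n IH =>
    intro s hcard
    classical
    rcases Finset.eq_empty_or_nonempty s with rfl | ⟨r, hr⟩
    · exact ⟨id, fun _ => 0, ⟨fun v _ => rfl, fun v _ => rfl,
        fun v hv => absurd hv (Finset.notMem_empty v), fun _ _ => rfl,
        fun v hv => absurd hv (Finset.notMem_empty v),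
        fun v hv => absurd hv (Finset.notMem_empty v)⟩⟩
    · set C := s.filter (fun w => RIn A s r w) with hCdef
      have hmemC : ∀ w, w ∈ C ↔ (w ∈ s ∧ RIn A s r w) := fun w => Finset.mem_filter
      have hCsub : C ⊆ s := Finset.filter_subset _ _
      have hrC : r ∈ C := (hmemC r).2 ⟨hr, Relation.ReflTransGen.refl⟩
      have hCconn : ∀ v, v ∈ C → RIn A C r v := fun v hv =>
        rin_filter (fun w hw hrw => (hmemC w).2 ⟨hw, hrw⟩) ((hmemC v).1 hv).2
      obtain ⟨p₁, h₁, hF₁, hp₁r, hanc₁⟩ := dfs_conn A hA C.card C le_rfl r hrC hCconn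
      have hsC : (s \ C).card ≤ n := by
        have hss : s \ C ⊂ s := by
          refine Finset.ssubset_iff_of_subset (Finset.sdiff_subset) |>.2 ?_
          exact ⟨r, hr, fun hmem => (Finset.mem_sdiff.1 hmem).2 hrC⟩
        have := Finset.card_lt_card hss
        omega
      obtain ⟨p₂, h₂, hF₂⟩ := IH (s \ C) hsC
      have hcross : ∀ v w, v ∈ C → w ∈ s → A v w → w ∈ C := by
        intro v w hvC hws hAvw
        exact (hmemC w).2 ⟨hws, ((hmemC v).1 hvC).2.tail ⟨hCsub hvC, hws, hAvw⟩⟩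
      have hp₂notC : ∀ x, x ∉ C → p₂ x ∉ C := by
        intro x hx
        by_cases hxs : x ∈ s \ C
        · exact fun hc => (Finset.mem_sdiff.1 (hF₂.mem_p x hxs)).2 hc
        · rw [hF₂.out_p x hxs]; exact hx
      refine ⟨fun v => if v ∈ C then p₁ v else p₂ v, fun v => if v ∈ C then h₁ v else h₂ v,
        ⟨?_, ?_, ?_, ?_, ?_, ?_⟩⟩
      · intro v hv
        have hvC : v ∉ C := fun hc => hv (hCsub hc)
        rw [if_neg hvC]
        exact hF₂.out_p v (fun hm => hv (Finset.sdiff_subset hm))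
      · intro v hv
        have hvC : v ∉ C := fun hc => hv (hCsub hc)
        rw [if_neg hvC]
        exact hF₂.out_h v (fun hm => hv (Finset.sdiff_subset hm))
      · intro v hv
        by_cases hvC : v ∈ C
        · rw [if_pos hvC]; exact hCsub (hF₁.mem_p v hvC)
        · rw [if_neg hvC]
          exact Finset.sdiff_subset (hF₂.mem_p v (Finset.mem_sdiff.2 ⟨hv, hvC⟩))
      · intro v hfix
        by_cases hvC : v ∈ C
        · rw [if_pos hvC] at hfix ⊢
          exact hF₁.root_h v hfix
        · rw [if_neg hvC] at hfix ⊢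
          exact hF₂.root_h v hfix
      · intro v hv hne
        by_cases hvC : v ∈ C
        · rw [if_pos hvC] at hne
          obtain ⟨hAv, hh⟩ := hF₁.step v hvC hne
          constructor
          · rw [if_pos hvC]; exact hAv
          · rw [if_pos hvC, if_pos hvC, if_pos (hF₁.mem_p v hvC), hh]
        · rw [if_neg hvC] at hne
          have hvs : v ∈ s \ C := Finset.mem_sdiff.2 ⟨hv, hvC⟩
          obtain ⟨hAv, hh⟩ := hF₂.step v hvs hne
          constructor
          · rw [if_neg hvC]; exact hAv
          · rw [if_neg hvC, if_neg hvC, if_neg (hp₂notC v hvC), hh]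
      · have hliftC : ∀ u w, w ∈ C → Anc p₁ u w →
            Anc (fun v => if v ∈ C then p₁ v else p₂ v) u w := by
          rintro u w hw ⟨k, hk⟩
          obtain ⟨j, hj⟩ := anc_lift (fun v => if v ∈ C then p₁ v else p₂ v) p₁
            (fun x => x ∈ C)
            (fun x hx => Or.inl ⟨by rw [if_pos hx], hF₁.mem_p x hx⟩) k w hw
          exact ⟨j, by rw [hj, hk]⟩
        have hliftT : ∀ u w, w ∉ C → Anc p₂ u w →
            Anc (fun v => if v ∈ C then p₁ v else p₂ v) u w := by
          rintro u w hw ⟨k, hk⟩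
          obtain ⟨j, hj⟩ := anc_lift (fun v => if v ∈ C then p₁ v else p₂ v) p₂
            (fun x => x ∉ C)
            (fun x hx => Or.inl ⟨by rw [if_neg hx], hp₂notC x hx⟩) k w hw
          exact ⟨j, by rw [hj, hk]⟩
        intro v hv w hw hAvw
        by_cases hvC : v ∈ C <;> by_cases hwC : w ∈ C
        · rcases hF₁.anc v hvC w hwC hAvw with h' | h'
          · exact Or.inl (hliftC v w hwC h')
          · exact Or.inr (hliftC w v hvC h')
        · exact absurd (hcross v w hvC hw hAvw) hwC
        · exact absurd (hcross w v hwC hv (hA _ _ hAvw)) hvC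
        · rcases hF₂.anc v (Finset.mem_sdiff.2 ⟨hv, hvC⟩) w
            (Finset.mem_sdiff.2 ⟨hw, hwC⟩) hAvw with h' | h'
          · exact Or.inl (hliftT v w hwC h')
          · exact Or.inr (hliftT w v hvC h')

variable {A : V → V → Prop} {p : V → V} {h : V → ℕ} [Fintype V]

theorem forest_fix (hF : IsForest A Finset.univ p h) {v : V} (h0 : h v = 0) : p v = v := by
  by_contra hne
  have := (hF.step v (Finset.mem_univ v) hne).2
  omega

theorem forest_iter_h (hF : IsForest A Finset.univ p h) :
    ∀ (k : ℕ) (v : V), k ≤ h v → h (p^[k] v) = h v - k := by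
  intro k
  induction k with
  | zero => intro v _; simp
  | succ k ih =>
    intro v hk
    have hne : p v ≠ v := by
      intro hfix
      rw [hF.root_h v hfix] at hk
      omega
    have hstep := (hF.step v (Finset.mem_univ v) hne).2
    rw [Function.iterate_succ_apply]
    rw [ih (p v) (by omega)]
    omega

theorem forest_iter_ge (hF : IsForest A Finset.univ p h) (v : V) :
    ∀ k, h v ≤ k → p^[k] v = p^[h v] v := by
  intro k hk
  obtain ⟨m, rfl⟩ := Nat.exists_eq_add_of_le hk
  rw [Nat.add_comm (h v) m, Function.iterate_add_apply]
  apply Function.iterate_fixed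
  apply forest_fix hF
  rw [forest_iter_h hF (h v) v le_rfl]
  omega

theorem forest_height_le (hF : IsForest A Finset.univ p h)
    (K : ℕ) (hpath : ∀ l : List V, l.Chain' A → l.Nodup → l.length ≤ K + 1) (v : V) :
    h v ≤ K := by
  have hchain : ((List.range (h v + 1)).map (fun k => p^[k] v)).Chain' A := by
    show List.IsChain A _
    rw [List.isChain_map, List.isChain_range_succ]
    intro m hm
    have hne : p (p^[m] v) ≠ p^[m] v := by
      intro hfix
      have h0 := hF.root_h _ hfix
      have := forest_iter_h hF m v (by omega)
      omega
    have hAs := (hF.step (p^[m] v) (Finset.mem_univ _) hne).1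
    rw [Function.iterate_succ_apply']
    exact hAs
  have hnodup : ((List.range (h v + 1)).map (fun k => p^[k] v)).Nodup := by
    refine List.Nodup.map_on ?_ List.nodup_range
    intro x hx y hy hxy
    rw [List.mem_range] at hx hy
    have h1 := forest_iter_h hF x v (by omega)
    have h2 := forest_iter_h hF y v (by omega)
    rw [hxy] at h1
    omega
  have hlen := hpath _ hchain hnodup
  rw [List.length_map, List.length_range] at hlen
  omega

end DFS

namespace DataTree

variable {σ D : Type}

theorem gadj_symm (T : DataTree σ D) : ∀ x y, T.GAdj x y → T.GAdj y x :=
  fun _ _ h => h.elim Or.inr Or.inl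

theorem gadjbase_irrefl (T : DataTree σ D) (x : T.GVert) : ¬ T.GAdjBase x x := by
  cases x with
  | inl v =>
    intro hb
    obtain ⟨h1, h2⟩ := hb
    have := T.depth_succ v h1
    rw [h2] at this
    omega
  | inr d => intro hb; exact hb

theorem gadj_irrefl (T : DataTree σ D) (x : T.GVert) : ¬ T.GAdj x x :=
  fun h => h.elim (gadjbase_irrefl T x) (gadjbase_irrefl T x)

theorem finite_gvert (T : DataTree σ D) : Finite T.GVert := by
  haveI : Fintype T.V := T.fin
  haveI : Finite {d : D // ∃ v, T.label v = Sum.inr d} := by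
    have hinj : Function.Injective
        (fun d : {d : D // ∃ v, T.label v = Sum.inr d} => Classical.choose d.2) := by
      intro d₁ d₂ heq
      replace heq : Classical.choose d₁.2 = Classical.choose d₂.2 := heq
      have h₁ := Classical.choose_spec d₁.2
      have h₂ := Classical.choose_spec d₂.2
      rw [heq] at h₁
      exact Subtype.ext (Sum.inr.inj (h₁.symm.trans h₂))
    exact Finite.of_injective _ hinj
  exact inferInstanceAs (Finite (T.V ⊕ _))

open Classical in
noncomputable def mkBits (T : DataTree σ D) (K : ℕ) (p : T.GVert → T.GVert)
    (h : T.GVert → ℕ) (x : T.GVert) : Fin (K+1) → Bool :=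
  fun i => if (i : ℕ) < h x then decide (T.GAdj (p^[h x - (i : ℕ)] x) x) else false

open Classical in
noncomputable def mkBase (T : DataTree σ D) (B : ℕ) (hd : ∀ v, T.depth v ≤ B) :
    T.GVert → ((Fin (B+1) × (σ ⊕ Unit) × Bool) ⊕ Unit) :=
  Sum.elim (fun v => Sum.inl (⟨T.depth v, Nat.lt_succ_of_le (hd v)⟩,
    Sum.map id (fun _ => ()) (T.label v), decide (v = T.root))) (fun _ => Sum.inr ())

noncomputable def mkLab (T : DataTree σ D) (B K : ℕ) (hd : ∀ v, T.depth v ≤ B)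
    (p : T.GVert → T.GVert) (h : T.GVert → ℕ) (hK : ∀ x, h x ≤ K) :
    T.GVert → (((Fin (B+1) × (σ ⊕ Unit) × Bool) ⊕ Unit) × Fin (K+1) × (Fin (K+1) → Bool)) :=
  fun x => (mkBase T B hd x, ⟨h x, Nat.lt_succ_of_le (hK x)⟩, mkBits T K p h x)

theorem mkLab_h (T : DataTree σ D) (B K : ℕ) (hd : ∀ v, T.depth v ≤ B)
    (p : T.GVert → T.GVert) (h : T.GVert → ℕ) (hK : ∀ x, h x ≤ K) (x : T.GVert) :
    ((mkLab T B K hd p h hK x).2.1 : ℕ) = h x := rfl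

theorem mkLab_bits (T : DataTree σ D) (B K : ℕ) (hd : ∀ v, T.depth v ≤ B)
    (p : T.GVert → T.GVert) (h : T.GVert → ℕ) (hK : ∀ x, h x ≤ K) (x : T.GVert) :
    (mkLab T B K hd p h hK x).2.2 = mkBits T K p h x := rfl

theorem mkLab_base (T : DataTree σ D) (B K : ℕ) (hd : ∀ v, T.depth v ≤ B)
    (p : T.GVert → T.GVert) (h : T.GVert → ℕ) (hK : ∀ x, h x ≤ K) (x : T.GVert) :
    (mkLab T B K hd p h hK x).1 = mkBase T B hd x := rfl

open Classical in
theorem mkBits_eq (T : DataTree σ D) (K : ℕ) (p : T.GVert → T.GVert)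
    (h : T.GVert → ℕ) (x : T.GVert) (i : Fin (K+1)) (hi : (i : ℕ) < h x) :
    mkBits T K p h x i = decide (T.GAdj (p^[h x - (i : ℕ)] x) x) := by
  unfold mkBits
  rw [if_pos hi]

end DataTree

/-- The relation `⪯` is a well-quasi-order on data trees of depth at most `B` whose associated
graphs have all simple paths of length at most `K` (a simple path being a duplicate-free
list of successively adjacent vertices, its length the number of edges). -/
theorem stmt8 {σ D : Type} [Finite σ] (B K : ℕ) (f : ℕ → DataTree σ D)
    (hd : ∀ n, ∀ v, (f n).depth v ≤ B)
    (hp : ∀ n, ∀ l : List (f n).GVert,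
      l.Chain' ((f n).GAdj) → l.Nodup → l.length ≤ K + 1) :
    ∃ i j, i < j ∧ (f i).Pre (f j) := by
  classical
  haveI hfin : ∀ n, Finite (f n).GVert := fun n => DataTree.finite_gvert (f n)
  haveI hft : ∀ n, Fintype (f n).GVert := fun n => Fintype.ofFinite _
  have hforest : ∀ n, ∃ (p : (f n).GVert → (f n).GVert) (h : (f n).GVert → ℕ),
      IsForest (f n).GAdj Finset.univ p h :=
    fun n => dfs_forest (f n).GAdj (DataTree.gadj_symm (f n)) Finset.univ.card Finset.univ le_rfl
  choose p h hF using hforest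
  have hK : ∀ n x, h n x ≤ K := fun n x => forest_height_le (hF n) K (hp n) x
  have hBd : ∀ n, ∀ x, p n ((p n)^[K] x) = (p n)^[K] x := by
    intro n x
    rw [forest_iter_ge (hF n) x K (hK n x)]
    apply forest_fix (hF n)
    rw [forest_iter_h (hF n) (h n x) x le_rfl]
    omega
  obtain ⟨i, j, hij, hemb⟩ :=
    LF.lf_wqo K (fun n => ⟨(f n).GVert, hfin n, p n,
      DataTree.mkLab (f n) B K (hd n) (p n) (h n) (hK n)⟩) (fun n x => hBd n x)
  obtain ⟨Φ, hΦinj, hΦp0, hΦlab0⟩ := hemb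
  have hΦp : ∀ v, Φ (p i v) = p j (Φ v) := hΦp0
  have hΦlab : ∀ x, DataTree.mkLab (f j) B K (hd j) (p j) (h j) (hK j) (Φ x)
      = DataTree.mkLab (f i) B K (hd i) (p i) (h i) (hK i) x := hΦlab0
  have hh : ∀ x, h j (Φ x) = h i x := fun x => congrArg (fun t => (t.2.1 : ℕ)) (hΦlab x)
  have hbits : ∀ x, DataTree.mkBits (f j) K (p j) (h j) (Φ x)
      = DataTree.mkBits (f i) K (p i) (h i) x := fun x => congrArg (fun t => t.2.2) (hΦlab x)
  have hbase : ∀ x, DataTree.mkBase (f j) B (hd j) (Φ x)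
      = DataTree.mkBase (f i) B (hd i) x := fun x => congrArg (fun t => t.1) (hΦlab x)
  have hΦiter : ∀ (k : ℕ) (x : (f i).GVert), Φ ((p i)^[k] x) = (p j)^[k] (Φ x) := by
    intro k
    induction k with
    | zero => intro x; rfl
    | succ k ih =>
      intro x
      rw [Function.iterate_succ_apply' (p i) k x, Function.iterate_succ_apply' (p j) k (Φ x),
        hΦp, ih]
  have key : ∀ (n : ℕ) (x y : (f n).GVert), (∃ k, (p n)^[k] y = x) → x ≠ y →
      x = (p n)^[h n y - h n x] y ∧ h n x < h n y := by
    rintro n x y ⟨k, hk⟩ hne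
    by_cases hky : k ≤ h n y
    · have h1 := forest_iter_h (hF n) k y hky
      rw [hk] at h1
      have hk0 : k ≠ 0 := by
        rintro rfl
        exact hne hk.symm
      have hy0 : h n y ≠ 0 := by
        intro h0
        have hfix := forest_fix (hF n) h0
        rw [Function.iterate_fixed hfix k] at hk
        exact hne hk.symm
      constructor
      · rw [show h n y - h n x = k by omega]
        exact hk.symm
      · omega
    · have he := forest_iter_ge (hF n) y k (by omega)
      rw [he] at hk
      have h1 := forest_iter_h (hF n) (h n y) y le_rfl
      rw [hk] at h1
      have hy0 : h n y ≠ 0 := by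
        intro h0
        rw [h0, Function.iterate_zero_apply] at hk
        exact hne hk.symm
      have h1' : h n x = 0 := by omega
      constructor
      · rw [h1', Nat.sub_zero]
        exact hk.symm
      · omega
  have hbit : ∀ x y, x = (p i)^[h i y - h i x] y → h i x < h i y →
      ((f i).GAdj x y ↔ (f j).GAdj (Φ x) (Φ y)) := by
    intro x y hxy hlt
    have hfin2 : (h i x) < K + 1 := by have := hK i x; omega
    have hb := congrArg (fun bf => bf (⟨h i x, hfin2⟩ : Fin (K+1))) (hbits y)
    rw [DataTree.mkBits_eq (f j) K (p j) (h j) (Φ y) ⟨h i x, hfin2⟩ (by rw [hh y]; exact hlt),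
        DataTree.mkBits_eq (f i) K (p i) (h i) y ⟨h i x, hfin2⟩ hlt] at hb
    rw [hh y] at hb
    rw [← hΦiter (h i y - h i x) y] at hb
    rw [← hxy] at hb
    exact (decide_eq_decide.mp hb).symm
  have hADJ : ∀ x y, (f i).GAdj x y ↔ (f j).GAdj (Φ x) (Φ y) := by
    intro x y
    by_cases hxe : x = y
    · subst hxe
      constructor
      · intro hc; exact absurd hc (DataTree.gadj_irrefl (f i) x)
      · intro hc; exact absurd hc (DataTree.gadj_irrefl (f j) (Φ x))
    · constructor
      · intro hxy
        rcases (hF i).anc x (Finset.mem_univ x) y (Finset.mem_univ y) hxy with hA | hA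
        · exact (hbit x y (key i x y hA hxe).1 (key i x y hA hxe).2).1 hxy
        · exact DataTree.gadj_symm (f j) _ _
            ((hbit y x (key i y x hA (Ne.symm hxe)).1 (key i y x hA (Ne.symm hxe)).2).1
              (DataTree.gadj_symm (f i) _ _ hxy))
      · intro hxy
        have hne2 : Φ x ≠ Φ y := fun he => hxe (hΦinj he)
        rcases (hF j).anc (Φ x) (Finset.mem_univ _) (Φ y) (Finset.mem_univ _) hxy with hA | hA
        · obtain ⟨hxy', hlt⟩ := key j (Φ x) (Φ y) hA hne2
          rw [hh x, hh y, ← hΦiter (h i y - h i x) y] at hxy'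
          rw [hh x, hh y] at hlt
          exact (hbit x y (hΦinj hxy') hlt).2 hxy
        · obtain ⟨hxy', hlt⟩ := key j (Φ y) (Φ x) hA (Ne.symm hne2)
          rw [hh x, hh y, ← hΦiter (h i x - h i y) x] at hxy'
          rw [hh x, hh y] at hlt
          exact DataTree.gadj_symm (f i) _ _
            ((hbit y x (hΦinj hxy') hlt).2 (DataTree.gadj_symm (f j) _ _ hxy))
  have hinl : ∀ v : (f i).V, ∃ w, Φ (Sum.inl v) = Sum.inl w := by
    intro v
    cases hc : Φ (Sum.inl v) with
    | inl w => exact ⟨w, rfl⟩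
    | inr dd =>
      have hb := hbase (Sum.inl v)
      rw [hc] at hb
      simp [DataTree.mkBase] at hb
  choose ψ hψ using hinl
  have hcomp : ∀ v : (f i).V,
      (f j).depth (ψ v) = (f i).depth v ∧
      Sum.map id (fun _ : D => ()) ((f j).label (ψ v)) =
        Sum.map id (fun _ : D => ()) ((f i).label v) ∧
      ((ψ v = (f j).root) ↔ (v = (f i).root)) := by
    intro v
    have hb := hbase (Sum.inl v)
    rw [hψ v] at hb
    simp only [DataTree.mkBase, Sum.elim_inl, Sum.inl.injEq, Prod.mk.injEq,
      Fin.mk.injEq, decide_eq_decide] at hb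
    exact ⟨hb.1, hb.2.1, hb.2.2⟩
  have hψinj : Function.Injective ψ := by
    intro v w hvw
    have hΦeq : Φ (Sum.inl v) = Φ (Sum.inl w) := by rw [hψ v, hψ w, hvw]
    exact Sum.inl.inj (hΦinj hΦeq)
  have hinr : ∀ dd : {d0 : D // ∃ v, (f i).label v = Sum.inr d0},
      ∃ ee, Φ (Sum.inr dd) = Sum.inr ee := by
    intro dd
    cases hc : Φ (Sum.inr dd) with
    | inl w =>
      have hb := hbase (Sum.inr dd)
      rw [hc] at hb
      simp [DataTree.mkBase] at hb
    | inr ee => exact ⟨ee, rfl⟩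
  choose ξ hξ using hinr
  have hdata : ∀ (v : (f i).V) (dd : {d0 : D // ∃ u, (f i).label u = Sum.inr d0}),
      (f i).label v = Sum.inr dd.val → (f j).label (ψ v) = Sum.inr (ξ dd).val := by
    intro v dd hv
    have hadj : (f i).GAdj (Sum.inl v) (Sum.inr dd) := Or.inl hv
    have hadj2 := (hADJ _ _).1 hadj
    rw [hψ v, hξ dd] at hadj2
    rcases hadj2 with hb | hb
    · exact hb
    · exact hb.elim
  refine ⟨i, j, hij, ψ, hψinj, ?_, ?_, ?_, ?_⟩
  · exact (hcomp (f i).root).2.2.mpr rfl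
  · intro v w
    constructor
    · rintro ⟨hwne, hpar⟩
      have hadj : (f i).GAdj (Sum.inl v) (Sum.inl w) := Or.inl ⟨hwne, hpar⟩
      have hadj2 := (hADJ _ _).1 hadj
      rw [hψ v, hψ w] at hadj2
      have hdw : (f i).depth w = (f i).depth v + 1 := by
        rw [(f i).depth_succ w hwne, hpar]
      rcases hadj2 with hb | hb
      · exact hb
      · exfalso
        obtain ⟨hvne, hpv⟩ := hb
        have h1 := (f j).depth_succ (ψ v) hvne
        rw [hpv] at h1
        rw [(hcomp v).1, (hcomp w).1] at h1
        omega
    · rintro ⟨hwne, hpar⟩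
      have hadj2 : (f j).GAdj (Φ (Sum.inl v)) (Φ (Sum.inl w)) := by
        rw [hψ v, hψ w]
        exact Or.inl ⟨hwne, hpar⟩
      have hadj := (hADJ _ _).2 hadj2
      rcases hadj with hb | hb
      · exact hb
      · exfalso
        obtain ⟨hvne, hpv⟩ := hb
        have h1 := (f i).depth_succ v hvne
        rw [hpv] at h1
        have h2 := (f j).depth_succ (ψ w) hwne
        rw [hpar] at h2
        rw [(hcomp v).1, (hcomp w).1] at h2
        omega
  · intro v a hv
    have hk := (hcomp v).2.1
    rw [hv] at hk
    cases hl : (f j).label (ψ v) with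
    | inl b =>
      rw [hl] at hk
      simp only [Sum.map_inl, id_eq, Sum.inl.injEq] at hk
      rw [hk]
    | inr dd =>
      rw [hl] at hk
      simp at hk
  · intro v w d d' hv hw
    refine ⟨(ξ ⟨d, v, hv⟩).val, (ξ ⟨d', w, hw⟩).val,
      hdata v ⟨d, v, hv⟩ hv, hdata w ⟨d', w, hw⟩ hw, ?_⟩
    constructor
    · intro hdd
      have hsub : (⟨d, v, hv⟩ : {d0 : D // ∃ u, (f i).label u = Sum.inr d0}) = ⟨d', w, hw⟩ :=
        Subtype.ext hdd
      rw [hsub]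
    · intro hee
      have h1 : ξ ⟨d, v, hv⟩ = ξ ⟨d', w, hw⟩ := Subtype.ext hee
      have h2 : Φ (Sum.inr ⟨d, v, hv⟩) = Φ (Sum.inr ⟨d', w, hw⟩) := by
        rw [hξ, hξ, h1]
      exact congrArg Subtype.val (Sum.inr.inj (hΦinj h2))
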